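/- Let f = max A (possibly f < b−1), κ = (b−1)/f, and let s be a complex number with Re s > log N / log b. Then for every real m > 0: e^{−m} E(κm) = Σ_{l=0}^∞ ( ∏_{k=1}^{l} α_B(−κ m b^{−k}) ) e^{−m b^{−l}} b^{−ls}, and this series converges absolutely (its l-th term is bounded in absolute value by N^l b^{−l·Re s}). -/

import Mathlib

open Finset

noncomputable section

/-- The rational point a₁/b + ⋯ + a_l/b^l attached to a digit tuple. -/
def digitVal (b l : ℕ) (a : Fin l → ℕ) : ℝ :=
  ∑ i : Fin l, (a i : ℝ) / (b : ℝ) ^ ((i : ℕ) + 1)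

/-- The finset of digit tuples of length l with entries in A. -/
def tuples (A : Finset ℕ) (l : ℕ) : Finset (Fin l → ℕ) :=
  Fintype.piFinset fun _ => A

/-- E(t) = 1 + Σ_{l≥1} Σ_{(a₁,…,a_l)∈A^l} e^{t(a₁/b+⋯+a_l/b^l)} b^{−ls}. -/
def egf (b : ℕ) (A : Finset ℕ) (s : ℂ) (t : ℝ) : ℂ :=
  ∑' l : ℕ, ∑ a ∈ tuples A l, ((Real.exp (t * digitVal b l a) : ℝ) : ℂ) * (b : ℂ) ^ (-(l : ℂ) * s)

/-- α_B(t) = Σ_{d∈B} e^{dt}. -/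
def alphaB (B : Finset ℕ) (t : ℝ) : ℝ := ∑ d ∈ B, Real.exp (d * t)

/-- The l-th term (Π_{k=1}^l α_B(−κmb^{−k})) e^{−mb^{−l}} b^{−ls} of the series in
Statement 19. -/
def kappaEgfTerm (b : ℕ) (B : Finset ℕ) (κ : ℝ) (s : ℂ) (m : ℝ) (l : ℕ) : ℂ :=
  ((∏ k ∈ Finset.Icc 1 l, alphaB B (-(κ * m * (b : ℝ) ^ (-(k : ℤ)))) : ℝ) : ℂ) *
    ((Real.exp (-(m * (b : ℝ) ^ (-(l : ℤ)))) : ℝ) : ℂ) * (b : ℂ) ^ (-(l : ℂ) * s)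

/-- Let f = max A (possibly f < b−1), κ = (b−1)/f, Re s > log N / log b.
For every m > 0, e^{−m}E(κm) = Σ_{l≥0} (Π_{k=1}^l α_B(−κmb^{−k})) e^{−mb^{−l}} b^{−ls},
the series converging absolutely, with l-th term bounded by N^l b^{−l·Re s}. -/
lemma sumExpA (f : ℕ) (A : Finset ℕ) (hfmax : ∀ a ∈ A, a ≤ f) (c : ℝ) :
    ∑ a ∈ A, Real.exp (c * a) = Real.exp (c * f) * alphaB (A.image (fun a => f - a)) (-c) := by
  rw [alphaB, Finset.sum_image (by intro x hx y hy h; simp only at h; have := hfmax x hx; have := hfmax y hy; omega)]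
  rw [Finset.mul_sum]
  refine Finset.sum_congr rfl fun a ha => ?_
  rw [← Real.exp_add]
  congr 1
  have : ((f - a : ℕ) : ℝ) = (f:ℝ) - a := by
    have := hfmax a ha; push_cast [Nat.cast_sub this]; ring
  rw [this]; ring

lemma factor (b : ℕ) (hb : 2 ≤ b) (A : Finset ℕ) (f : ℕ) (hfmax : ∀ a ∈ A, a ≤ f)
    (hf0 : 0 < f) (m : ℝ) (n : ℕ) :
    ∑ x ∈ A, Real.exp (((b:ℝ)-1)/(f:ℝ) * m * ((x:ℝ)/(b:ℝ)^(n+1)))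
      = Real.exp (((b:ℝ)-1)*m*(b:ℝ)^(-((n:ℤ)+1)))
        * alphaB (A.image (fun a => f - a)) (-(((b:ℝ)-1)/(f:ℝ)*m*(b:ℝ)^(-((n:ℤ)+1)))) := by
  have hb0 : (b:ℝ) ≠ 0 := by positivity
  have hf : (f:ℝ) ≠ 0 := by positivity
  set κ := ((b:ℝ)-1)/(f:ℝ) with hκ
  set c := κ*m*(b:ℝ)^(-((n:ℤ)+1)) with hc
  have hpow : (b:ℝ)^(-((n:ℤ)+1)) = ((b:ℝ)^(n+1))⁻¹ := by
    rw [← zpow_natCast (b:ℝ) (n+1)]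
    push_cast
    rw [← zpow_neg]
  have h1 : ∀ x : ℕ, κ * m * ((x:ℝ)/(b:ℝ)^(n+1)) = c * x := by
    intro x; rw [hc, hpow]; ring
  simp only [h1]
  rw [sumExpA f A hfmax c]
  congr 2
  rw [hc, hκ, hpow]
  field_simp

lemma geomAux (b : ℕ) (hb : 2 ≤ b) (m : ℝ) (l : ℕ) :
    ∑ i ∈ Finset.range l, ((b:ℝ) - 1) * m * (b:ℝ)^(-((i:ℤ)+1)) = m - m * (b:ℝ)^(-(l:ℤ)) := by
  have hb0 : (b:ℝ) ≠ 0 := by positivity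
  induction l with
  | zero => simp
  | succ l ih =>
    rw [Finset.sum_range_succ, ih]
    have h1 : (-((l:ℤ)) ) = -((l:ℤ)+1) + 1 := by ring
    have h2 : (-(((l+1:ℕ)):ℤ)) = -((l:ℤ)+1) := by push_cast; ring
    rw [h2, h1, zpow_add₀ hb0]
    simp only [zpow_one]
    ring

lemma key (b : ℕ) (hb : 2 ≤ b) (A : Finset ℕ) (f : ℕ) (hfmax : ∀ a ∈ A, a ≤ f)
    (hf0 : 0 < f) (m : ℝ) (l : ℕ) :
    ∑ a ∈ tuples A l, Real.exp (((b:ℝ)-1)/(f:ℝ) * m * digitVal b l a)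
      = (∏ k ∈ Finset.Icc 1 l,
          alphaB (A.image fun a => f - a) (-(((b:ℝ)-1)/(f:ℝ) * m * (b:ℝ)^(-(k:ℤ)))))
        * Real.exp (m - m*(b:ℝ)^(-(l:ℤ))) := by
  set κ := ((b:ℝ)-1)/(f:ℝ) with hκ
  set B := A.image fun a => f - a with hB
  have step1 : ∀ a : Fin l → ℕ, Real.exp (κ * m * digitVal b l a)
      = ∏ i : Fin l, Real.exp (κ * m * ((a i : ℝ)/(b:ℝ)^((i:ℕ)+1))) := by
    intro a
    rw [digitVal, Finset.mul_sum, Real.exp_sum]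
  simp only [step1]
  rw [tuples, show (∑ x ∈ Fintype.piFinset fun _ : Fin l => A, ∏ i : Fin l,
      Real.exp (κ * m * ((x i : ℝ)/(b:ℝ)^((i:ℕ)+1))))
    = ∏ i : Fin l, ∑ x ∈ A, Real.exp (κ * m * ((x:ℝ)/(b:ℝ)^((i:ℕ)+1))) from
    (Finset.prod_univ_sum (fun _ : Fin l => A)
      (fun i x => Real.exp (κ * m * ((x : ℝ)/(b:ℝ)^((i:ℕ)+1))))).symm]
  have step2 : ∀ i : Fin l, ∑ x ∈ A, Real.exp (κ * m * ((x:ℝ)/(b:ℝ)^((i:ℕ)+1)))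
      = Real.exp (((b:ℝ)-1)*m*(b:ℝ)^(-(((i:ℕ):ℤ)+1)))
        * alphaB B (-(κ*m*(b:ℝ)^(-(((i:ℕ):ℤ)+1)))) := fun i =>
    factor b hb A f hfmax hf0 m (i:ℕ)
  simp only [step2]
  rw [Finset.prod_mul_distrib, mul_comm]
  congr 1
  · -- products of alphaB
    rw [Fin.prod_univ_eq_prod_range (fun n => alphaB B (-(κ*m*(b:ℝ)^(-((n:ℤ)+1))))) l]
    rw [← Finset.Ico_add_one_right_eq_Icc, Finset.prod_Ico_eq_prod_range]
    refine Finset.prod_congr (by simp) fun i _ => ?_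
    congr 2
    push_cast
    ring_nf
  · rw [Fin.prod_univ_eq_prod_range (fun n => Real.exp (((b:ℝ)-1)*m*(b:ℝ)^(-((n:ℤ)+1)))) l,
      ← Real.exp_sum, geomAux b hb m l]

theorem kappa_egf_product_expansion
    (b : ℕ) (hb : 2 ≤ b) (A : Finset ℕ) (hA : A.Nonempty) (hAb : A ⊆ Finset.range b)
    (f : ℕ) (hfA : f ∈ A) (hfmax : ∀ a ∈ A, a ≤ f) (hf0 : 0 < f)
    (s : ℂ) (hs : Real.log A.card / Real.log b < s.re) (m : ℝ) (hm : 0 < m) :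
    ((Real.exp (-m) : ℝ) : ℂ) * egf b A s (((b : ℝ) - 1) / (f : ℝ) * m)
        = ∑' l : ℕ, kappaEgfTerm b (A.image fun a => f - a) (((b : ℝ) - 1) / (f : ℝ)) s m l
    ∧ (∀ l : ℕ, ‖kappaEgfTerm b (A.image fun a => f - a) (((b : ℝ) - 1) / (f : ℝ)) s m l‖
        ≤ (A.card : ℝ) ^ l * (b : ℝ) ^ (-(l : ℝ) * s.re))
    ∧ Summable (fun l : ℕ =>
        ‖kappaEgfTerm b (A.image fun a => f - a) (((b : ℝ) - 1) / (f : ℝ)) s m l‖) := by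
  have hb0 : (0:ℝ) < b := by positivity
  have hb1 : (1:ℝ) < b := by exact_mod_cast hb.trans_lt' one_lt_two
  have hκ0 : 0 ≤ ((b:ℝ)-1)/(f:ℝ) := by
    apply div_nonneg (by linarith) (by positivity)
  have hN0 : 0 < A.card := Finset.card_pos.mpr hA
  have hN0' : (0:ℝ) < A.card := by exact_mod_cast hN0
  set κ := ((b:ℝ)-1)/(f:ℝ) with hκdef
  set B := A.image fun a => f - a with hBdef
  -- bound
  have hbound : ∀ l : ℕ, ‖kappaEgfTerm b B κ s m l‖
      ≤ (A.card : ℝ) ^ l * (b : ℝ) ^ (-(l : ℝ) * s.re) := by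
    intro l
    rw [kappaEgfTerm]
    rw [norm_mul, norm_mul, Complex.norm_real, Complex.norm_real,
      Complex.norm_natCast_cpow_of_pos (by omega)]
    have hre : (-(l:ℂ) * s).re = -(l:ℝ) * s.re := by simp
    rw [hre]
    have hP : |∏ k ∈ Finset.Icc 1 l, alphaB B (-(κ * m * (b : ℝ) ^ (-(k : ℤ))))|
        ≤ (A.card : ℝ)^l := by
      have hPnn : (0:ℝ) ≤ ∏ k ∈ Finset.Icc 1 l, alphaB B (-(κ * m * (b : ℝ) ^ (-(k : ℤ)))) :=
        Finset.prod_nonneg fun k _ => Finset.sum_nonneg fun d _ => (Real.exp_pos _).le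
      rw [abs_of_nonneg hPnn]
      calc ∏ k ∈ Finset.Icc 1 l, alphaB B (-(κ * m * (b : ℝ) ^ (-(k : ℤ))))
          ≤ ∏ _k ∈ Finset.Icc 1 l, ((A.card : ℝ)) := by
            apply Finset.prod_le_prod
            · exact fun k _ => Finset.sum_nonneg fun d _ => (Real.exp_pos _).le
            intro k _
            rw [alphaB]
            calc ∑ d ∈ B, Real.exp (d * (-(κ * m * (b : ℝ) ^ (-(k : ℤ)))))
                ≤ ∑ _d ∈ B, (1:ℝ) := by
                  apply Finset.sum_le_sum
                  intro d _
                  apply Real.exp_le_one_iff.mpr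
                  apply mul_nonpos_of_nonneg_of_nonpos (by positivity)
                  simp only [neg_nonpos]
                  positivity
              _ = (B.card : ℝ) := by simp
              _ ≤ (A.card : ℝ) := by exact_mod_cast Finset.card_image_le
        _ = ((A.card : ℝ)) ^ l := by rw [Finset.prod_const, Nat.card_Icc]; norm_num
    have hE : |Real.exp (-(m * (b : ℝ) ^ (-(l : ℤ))))| ≤ 1 := by
      rw [abs_of_pos (Real.exp_pos _)]
      apply Real.exp_le_one_iff.mpr
      simp only [neg_nonpos]
      positivity
    have hw : (0:ℝ) ≤ (b:ℝ) ^ (-(l:ℝ) * s.re) := by positivity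
    calc |∏ k ∈ Finset.Icc 1 l, alphaB B (-(κ * m * (b : ℝ) ^ (-(k : ℤ))))|
          * |Real.exp (-(m * (b : ℝ) ^ (-(l : ℤ))))| * (b:ℝ) ^ (-(l:ℝ) * s.re)
        ≤ (A.card : ℝ)^l * 1 * (b:ℝ) ^ (-(l:ℝ) * s.re) := by
          apply mul_le_mul_of_nonneg_right _ hw
          exact mul_le_mul hP hE (abs_nonneg _) (by positivity)
      _ = (A.card : ℝ)^l * (b:ℝ) ^ (-(l:ℝ) * s.re) := by ring
  -- geometric comparison
  have hgeom : ∀ l : ℕ, (A.card : ℝ)^l * (b:ℝ) ^ (-(l:ℝ) * s.re)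
      = ((A.card : ℝ) * (b:ℝ) ^ (-s.re))^l := by
    intro l
    rw [mul_pow, ← Real.rpow_natCast ((b:ℝ)^(-s.re)) l, ← Real.rpow_mul hb0.le]
    ring_nf
  have hr : (A.card : ℝ) * (b:ℝ) ^ (-s.re) < 1 := by
    rw [Real.rpow_neg hb0.le, ← div_eq_mul_inv, div_lt_one (by positivity)]
    calc (A.card:ℝ) = Real.exp (Real.log (A.card:ℝ)) := (Real.exp_log hN0').symm
      _ < Real.exp (s.re * Real.log b) := by
          apply Real.exp_lt_exp.mpr
          rw [← div_lt_iff₀ (Real.log_pos hb1)] at *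
          exact hs
      _ = (b:ℝ) ^ s.re := by
          rw [Real.rpow_def_of_pos hb0, mul_comm]
  have hsum : Summable (fun l : ℕ => ‖kappaEgfTerm b B κ s m l‖) := by
    apply Summable.of_nonneg_of_le (fun l => norm_nonneg _)
      (fun l => (hbound l).trans_eq (hgeom l))
    exact summable_geometric_of_lt_one (by positivity) hr
  -- main equality
  have hterm : ∀ l : ℕ, ((Real.exp (-m) : ℝ) : ℂ)
      * ∑ a ∈ tuples A l, ((Real.exp (κ * m * digitVal b l a) : ℝ) : ℂ) * (b : ℂ) ^ (-(l : ℂ) * s)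
      = kappaEgfTerm b B κ s m l := by
    intro l
    rw [← Finset.sum_mul, ← Complex.ofReal_sum, key b hb A f hfmax hf0 m l, kappaEgfTerm]
    have hcomb : Real.exp (-m) * ((∏ k ∈ Finset.Icc 1 l, alphaB B (-(κ * m * (b:ℝ) ^ (-(k:ℤ)))))
          * Real.exp (m - m * (b:ℝ)^(-(l:ℤ))))
        = (∏ k ∈ Finset.Icc 1 l, alphaB B (-(κ * m * (b:ℝ) ^ (-(k:ℤ)))))
          * Real.exp (-(m * (b:ℝ)^(-(l:ℤ)))) := by
      rw [mul_comm (Real.exp (-m)) _, mul_assoc, ← Real.exp_add]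
      congr 2
      ring
    rw [← mul_assoc, ← Complex.ofReal_mul, ← Complex.ofReal_mul, hcomb,
      Complex.ofReal_mul]
  constructor
  · rw [egf, ← tsum_mul_left]
    exact tsum_congr hterm
  exact ⟨hbound, hsum⟩
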